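/- For any W ∈ ℝ^{m×r} and f satisfying the standard assumption, β(W) ≥ σ(W), where β(W) = min(ν_β(W), (1/√2)γ_β(W)) with ν_β(W) = min_j ‖R^f_{W(:,J)}(w_j)‖₂ (J = {1,...,r}\{j}) and γ_β(W) = min over i≠j and J ⊆ {1,...,r}\{i,j} of ‖R^f_{W(:,J)}(w_i) - R^f_{W(:,J)}(w_j)‖₂, and σ(W) is the smallest singular value (0 if m < r). -/

import Mathlib

noncomputable section

open scoped BigOperators

abbrev E (m : ℕ) := EuclideanSpace ℝ (Fin m)

def toE {m : ℕ} (x : Fin m → ℝ) : E m := WithLp.toLp 2 x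

/-- The unit simplex `Δ = {y | y ≥ 0, ∑ y ≤ 1}`. -/
def simplex (n : Type*) [Fintype n] : Set (n → ℝ) :=
  {y | (∀ i, 0 ≤ y i) ∧ ∑ i, y i ≤ 1}

/-- Assumption 2 of the paper: `f` is `μ`-strongly convex with `L`-Lipschitz
gradient `f'`, and `0` is its global minimizer with `f 0 = 0`. -/
structure GoodF {m : ℕ} (f : E m → ℝ) (f' : E m → E m) (μ L : ℝ) : Prop where
  mu_pos : 0 < μ
  grad : ∀ x, HasGradientAt f (f' x) x
  lip : ∀ x y : E m, ‖f' x - f' y‖ ≤ L * ‖x - y‖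
  sconv : ∀ x y : E m, ∀ δ : ℝ, 0 ≤ δ → δ ≤ 1 →
    f (δ • x + (1 - δ) • y) ≤ δ * f x + (1 - δ) * f y - μ / 2 * δ * (1 - δ) * ‖x - y‖ ^ 2
  f_zero : f 0 = 0
  min_zero : ∀ x, f 0 ≤ f x

/-- A minimizer over the unit simplex of `y ↦ f (x - B y)` (chosen via choice). -/
def argminSimplex {m : ℕ} {n : Type*} [Fintype n] (f : E m → ℝ)
    (B : Matrix (Fin m) n ℝ) (x : E m) : n → ℝ :=
  Classical.epsilon fun y => y ∈ simplex n ∧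
    ∀ z ∈ simplex n, f (x - toE (B.mulVec y)) ≤ f (x - toE (B.mulVec z))

/-- The residual `R_B^f(x) = x - B y*` where `y* = argmin_{y ∈ Δ} f (x - B y)`. -/
def resid {m : ℕ} {n : Type*} [Fintype n] (f : E m → ℝ)
    (B : Matrix (Fin m) n ℝ) (x : E m) : E m :=
  x - toE (B.mulVec (argminSimplex f B x))

/-- Column-wise residual matrix `R_B^f(A)`. -/
def residMat {m : ℕ} {n k : Type*} [Fintype n] (f : E m → ℝ)
    (B : Matrix (Fin m) n ℝ) (A : Matrix (Fin m) k ℝ) : Matrix (Fin m) k ℝ :=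
  fun i j => resid f B (toE fun i' => A i' j) i

/-- `‖N‖_{1,2}`: the maximum `ℓ₂` column norm. -/
def norm12 {m : ℕ} {n : Type*} [Fintype n] (N : Matrix (Fin m) n ℝ) : ℝ :=
  sSup {c | ∃ j, c = ‖toE fun i => N i j‖}

/-- `α(W)`: minimum distance between a column of `W` and the convex hull of the
other columns of `W` and the origin. -/
def alpha {m r : ℕ} (W : Matrix (Fin m) (Fin r) ℝ) : ℝ :=
  sInf {c | ∃ (j : Fin r) (x : Fin r → ℝ), x ∈ simplex (Fin r) ∧ x j = 0 ∧
    c = ‖toE (fun i => W i j) - toE (W.mulVec x)‖}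

/-- `σ(W)`: smallest singular value (`min_{‖z‖₂ ≥ 1} ‖Wz‖₂`) if `m ≥ r`, and `0` if `m < r`. -/
def smin {m r : ℕ} (W : Matrix (Fin m) (Fin r) ℝ) : ℝ :=
  if r ≤ m then sInf {c | ∃ z : Fin r → ℝ, 1 ≤ ‖toE z‖ ∧ c = ‖toE (W.mulVec z)‖} else 0

/-- `[B, x]`: append the column `x` to `B`. -/
def appendCol {m s : ℕ} (B : Matrix (Fin m) (Fin s) ℝ) (x : E m) :
    Matrix (Fin m) (Fin (s + 1)) ℝ :=
  fun i => Fin.snoc (fun j => B i j) (x i)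

/-- `[A, B]`: horizontal concatenation. -/
def appendMat {m k s : ℕ} (A : Matrix (Fin m) (Fin k) ℝ) (B : Matrix (Fin m) (Fin s) ℝ) :
    Matrix (Fin m) (Fin (k + s)) ℝ :=
  fun i => Fin.append (fun j => A i j) (fun j => B i j)

/-- `ω(P) = min (min_i ‖p_i‖₂, (1/√2) min_{i ≠ j} ‖p_i - p_j‖₂)`. -/
def omegaM {m : ℕ} {k : Type*} [Fintype k] (P : Matrix (Fin m) k ℝ) : ℝ :=
  sInf ({c | ∃ i, c = ‖toE fun a => P a i‖} ∪
    {c | ∃ i j, i ≠ j ∧ c = (Real.sqrt 2)⁻¹ * ‖(toE fun a => P a i) - toE fun a => P a j‖})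

/-- `β(W) = min (ν_β(W), γ_β(W)/√2)` as in the paper. -/
def beta {m r : ℕ} (f : E m → ℝ) (W : Matrix (Fin m) (Fin r) ℝ) : ℝ :=
  sInf ({c | ∃ j : Fin r,
      c = ‖resid f (W.submatrix id fun p : {i // i ≠ j} => (p : Fin r)) (toE fun a => W a j)‖} ∪
    {c | ∃ (i j : Fin r) (J : Finset (Fin r)), i ≠ j ∧ i ∉ J ∧ j ∉ J ∧
      c = (Real.sqrt 2)⁻¹ *
        ‖resid f (W.submatrix id fun p : J => (p : Fin r)) (toE fun a => W a i) -
         resid f (W.submatrix id fun p : J => (p : Fin r)) (toE fun a => W a j)‖})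

/-- Singular values of `B` in nonincreasing order (`i`-th largest at index `i`). -/
def singVals {m s : ℕ} (B : Matrix (Fin m) (Fin s) ℝ) : Fin s → ℝ := fun i =>
  Real.sqrt (((show (Matrix.transpose B * B).IsHermitian by
      simpa using Matrix.isHermitian_conjTranspose_mul_self B).eigenvalues ∘
    Tuple.sort (show (Matrix.transpose B * B).IsHermitian by
      simpa using Matrix.isHermitian_conjTranspose_mul_self B).eigenvalues) i.rev)

/-- The spectral norm `‖N‖₂` (ℓ₂ operator norm). -/
def spec {m s : ℕ} (N : Matrix (Fin m) (Fin s) ℝ) : ℝ :=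
  ‖LinearMap.toContinuousLinearMap (Matrix.toEuclideanLin N)‖


section AuxStmt14

lemma aux_one_le_norm {r : ℕ} (z : Fin r → ℝ) (j : Fin r) (h : 1 ≤ |z j|) : 1 ≤ ‖toE z‖ := by
  have h1 : |z j| ≤ ‖toE z‖ := by
    rw [EuclideanSpace.norm_eq]
    simp only [Real.norm_eq_abs, toE, PiLp.toLp_apply]
    calc |z j| = Real.sqrt (|z j| ^ 2) := by rw [Real.sqrt_sq (abs_nonneg _)]
    _ ≤ _ := Real.sqrt_le_sqrt (Finset.single_le_sum (f := fun i => |z i| ^ 2)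
        (fun i _ => sq_nonneg _) (Finset.mem_univ j))
  linarith

lemma aux_sqrt2_le {r : ℕ} (z : Fin r → ℝ) (i j : Fin r) (hij : i ≠ j)
    (hi : |z i| = 1) (hj : |z j| = 1) : Real.sqrt 2 ≤ ‖toE z‖ := by
  rw [EuclideanSpace.norm_eq]
  simp only [Real.norm_eq_abs, toE, PiLp.toLp_apply]
  apply Real.sqrt_le_sqrt
  have h2 : (2:ℝ) = ∑ k ∈ ({i, j} : Finset (Fin r)), |z k| ^ 2 := by
    rw [Finset.sum_pair hij, hi, hj]; norm_num
  rw [h2]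
  exact Finset.sum_le_sum_of_subset_of_nonneg (Finset.subset_univ _) (fun k _ _ => sq_nonneg _)

lemma aux_smin_le {m r : ℕ} (W : Matrix (Fin m) (Fin r) ℝ) (z : Fin r → ℝ)
    (hz : 1 ≤ ‖toE z‖) : smin W ≤ ‖toE (W.mulVec z)‖ := by
  unfold smin
  split_ifs with h
  · exact csInf_le ⟨0, fun c ⟨z', _, hc⟩ => hc ▸ norm_nonneg _⟩ ⟨z, hz, rfl⟩
  · exact norm_nonneg _

lemma aux_case1 {m r : ℕ} (W : Matrix (Fin m) (Fin r) ℝ) (j : Fin r)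
    (y : {i : Fin r // i ≠ j} → ℝ) :
    toE (W.mulVec (fun k => if h : k = j then 1 else -(y ⟨k, h⟩))) =
      toE (fun a => W a j) -
        toE ((W.submatrix id fun p : {i : Fin r // i ≠ j} => (p : Fin r)).mulVec y) := by
  ext a
  simp only [toE, Matrix.mulVec, dotProduct, PiLp.sub_apply, PiLp.toLp_apply, Matrix.submatrix_apply,
    id_eq]
  rw [← Finset.sum_erase_add _ _ (Finset.mem_univ j)]
  rw [Finset.sum_subtype (p := fun k => k ≠ j) (F := inferInstance) (Finset.univ.erase j)
    (by simp) (fun k => W a k * (if h : k = j then 1 else -(y ⟨k, h⟩)))]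
  have h2 : ∀ x : {i : Fin r // i ≠ j},
      W a x * (if h : (x : Fin r) = j then 1 else -(y ⟨x, h⟩)) = -(W a x * y x) := by
    intro x; rw [dif_neg x.2]; ring
  rw [Finset.sum_congr rfl (fun x _ => h2 x)]
  simp
  ring

lemma aux_case2 {m r : ℕ} (W : Matrix (Fin m) (Fin r) ℝ) (i j : Fin r) (J : Finset (Fin r))
    (hij : i ≠ j) (hi : i ∉ J) (hj : j ∉ J) (yi yj : J → ℝ) :
    toE (W.mulVec (fun k => if k = i then 1 else if k = j then -1 else
        if h : k ∈ J then yj ⟨k, h⟩ - yi ⟨k, h⟩ else 0)) =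
      (toE (fun a => W a i) - toE ((W.submatrix id fun p : J => (p : Fin r)).mulVec yi)) -
      (toE (fun a => W a j) - toE ((W.submatrix id fun p : J => (p : Fin r)).mulVec yj)) := by
  ext a
  simp only [toE, Matrix.mulVec, dotProduct, PiLp.sub_apply, PiLp.toLp_apply, Matrix.submatrix_apply,
    id_eq]
  set g : Fin r → ℝ := fun k => W a k * (if k = i then 1 else if k = j then -1 else
    if h : k ∈ J then yj ⟨k, h⟩ - yi ⟨k, h⟩ else 0) with hg
  have hjmem : j ∈ Finset.univ.erase i := Finset.mem_erase.2 ⟨(Ne.symm hij), Finset.mem_univ j⟩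
  have step1 : ∑ k, g k = ∑ k ∈ (Finset.univ.erase i).erase j, g k + g j + g i := by
    rw [Finset.sum_erase_add _ _ hjmem, Finset.sum_erase_add _ _ (Finset.mem_univ i)]
  have hsub : J ⊆ (Finset.univ.erase i).erase j := by
    intro x hx
    exact Finset.mem_erase.2 ⟨fun h => hj (h ▸ hx),
      Finset.mem_erase.2 ⟨fun h => hi (h ▸ hx), Finset.mem_univ x⟩⟩
  have step2 : ∑ k ∈ (Finset.univ.erase i).erase j, g k = ∑ k ∈ J, g k := by
    refine (Finset.sum_subset hsub ?_).symm
    intro x hx hxJ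
    obtain ⟨hxj, hxi'⟩ := Finset.mem_erase.1 hx
    obtain ⟨hxi, _⟩ := Finset.mem_erase.1 hxi'
    simp [hg, hxi, hxj, hxJ]
  have step3 : ∑ k ∈ J, g k = ∑ p : J, W a p * (yj p - yi p) := by
    rw [← Finset.sum_coe_sort J g]
    refine Finset.sum_congr rfl fun p _ => ?_
    have hpi : (p : Fin r) ≠ i := fun h => hi (h ▸ p.2)
    have hpj : (p : Fin r) ≠ j := fun h => hj (h ▸ p.2)
    simp [hg, hpi, hpj, p.2]
  have hgi : g i = W a i := by simp [hg]
  have hgj : g j = -(W a j) := by simp [hg, Ne.symm hij, hij]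
  rw [step1, step2, step3, hgi, hgj]
  simp only [mul_sub, Finset.sum_sub_distrib]
  ring

end AuxStmt14

theorem stmt14 (m r : ℕ) (μ L : ℝ) (f : E m → ℝ) (f' : E m → E m) (hf : GoodF f f' μ L)
    (W : Matrix (Fin m) (Fin r) ℝ) :
    smin W ≤ beta f W := by
  by_cases hr : r = 0
  · subst hr
    have hs : smin W = 0 := by
      unfold smin
      rw [if_pos (Nat.zero_le m)]
      have hset : {c | ∃ z : Fin 0 → ℝ, 1 ≤ ‖toE z‖ ∧ c = ‖toE (W.mulVec z)‖} = (∅ : Set ℝ) := by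
        ext c
        simp only [Set.mem_setOf_eq, Set.mem_empty_iff_false, iff_false, not_exists]
        rintro z ⟨hz, -⟩
        have h0 : ‖toE z‖ = 0 := by
          simp [toE, EuclideanSpace.norm_eq]
        linarith
      rw [hset, Real.sInf_empty]
    rw [hs]
    unfold beta
    apply Real.sInf_nonneg
    rintro c (⟨j, _⟩ | ⟨i, _⟩)
    · exact (Nat.not_lt_zero _ j.isLt).elim
    · exact (Nat.not_lt_zero _ i.isLt).elim
  · have j0 : Fin r := ⟨0, Nat.pos_of_ne_zero hr⟩
    unfold beta
    refine le_csInf ⟨_, Or.inl ⟨j0, rfl⟩⟩ ?_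
    rintro c (⟨j, rfl⟩ | ⟨i, j, J, hij, hi, hj, rfl⟩)
    · set B := W.submatrix id fun p : {i : Fin r // i ≠ j} => (p : Fin r) with hB
      set y := argminSimplex f B (toE fun a => W a j) with hy
      set z : Fin r → ℝ := fun k => if h : k = j then 1 else -(y ⟨k, h⟩) with hz
      have h1 : 1 ≤ ‖toE z‖ := aux_one_le_norm z j (by simp [hz])
      calc smin W ≤ ‖toE (W.mulVec z)‖ := aux_smin_le W z h1
      _ = _ := by rw [aux_case1 W j y]; rfl
    · set B := W.submatrix id fun p : J => (p : Fin r) with hB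
      set yi := argminSimplex f B (toE fun a => W a i) with hyi
      set yj := argminSimplex f B (toE fun a => W a j) with hyj
      set z : Fin r → ℝ := fun k => if k = i then 1 else if k = j then -1 else
        if h : k ∈ J then yj ⟨k, h⟩ - yi ⟨k, h⟩ else 0 with hz
      have h2 : Real.sqrt 2 ≤ ‖toE z‖ :=
        aux_sqrt2_le z i j hij (by simp [hz]) (by simp [hz, Ne.symm hij])
      have hs2 : (0:ℝ) < Real.sqrt 2 := by positivity
      have h1 : 1 ≤ ‖toE ((Real.sqrt 2)⁻¹ • z)‖ := by
        have he : toE ((Real.sqrt 2)⁻¹ • z) = (Real.sqrt 2)⁻¹ • toE z := by simp [toE]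
        rw [he, norm_smul, Real.norm_eq_abs, abs_of_pos (by positivity)]
        calc (1:ℝ) = (Real.sqrt 2)⁻¹ * Real.sqrt 2 := (inv_mul_cancel₀ hs2.ne').symm
        _ ≤ _ := by gcongr
      calc smin W ≤ ‖toE (W.mulVec ((Real.sqrt 2)⁻¹ • z))‖ := aux_smin_le W _ h1
      _ = (Real.sqrt 2)⁻¹ * ‖toE (W.mulVec z)‖ := by
          rw [Matrix.mulVec_smul]
          have he : toE ((Real.sqrt 2)⁻¹ • W.mulVec z) = (Real.sqrt 2)⁻¹ • toE (W.mulVec z) := by simp [toE]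
          rw [he, norm_smul, Real.norm_eq_abs, abs_of_pos (by positivity)]
      _ = _ := by rw [aux_case2 W i j J hij hi hj yi yj]; rfl
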